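/- Core identity underlying the generalized cycle benchmarking protocol (Theorem 1 of the paper): let n, m ∈ ℕ, let p : Z2^n × Z2^n × V_m → ℝ with Pauli fidelities λ(x,y,Q) := Σ_{a,b,P} (-1)^{a·x + b·y + ⟨P,Q⟩} p(a,b,P), and let U_k(ρ) := Σ_{a,b,P} p(a,b,P) · (W(P) ⊗ E_{k+b,k+a}) ρ (W(P) ⊗ E_{k+b,k+a})†. Let G be a unitary on the (m+n)-qubit space and set T_k(ρ) := U_k(G ρ G†). Let l ≥ 1, let x_i, y_i ∈ Z2^n and Q_i ∈ V_m for i = 1,…,l, and let H_1,…,H_{l−1} be unitaries on the (m+n)-qubit space satisfying H_i (W(Q_i) ⊗ Z^{y_i}) H_i† = G† (W(Q_{i+1}) ⊗ Z^{x_{i+1}}) G for every 1 ≤ i ≤ l−1. Then for every complex matrix ρ on the (m+n)-qubit space: Σ_{m_1,…,m_l ∈ Z2^n} (-1)^{Σ_{i=1}^l m_i·(x_i+y_i)} · Tr((W(Q_l) ⊗ Z^{y_l}) · T_{m_l}(H_{l−1} ( ⋯ H_1 (T_{m_1}(ρ)) H_1† ⋯ ) H_{l−1}†)) = (Π_{i=1}^l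 λ(x_i,y_i,Q_i)) · Tr(G† (W(Q_1) ⊗ Z^{x_1}) G · ρ). -/

import Mathlib

set_option maxHeartbeats 1000000


open Finset Matrix Kronecker

/-- `m`-qubit Pauli operators modulo phase, as pairs of X- and Z-exponents per qubit. -/
abbrev V (m : ℕ) := Fin m → ZMod 2 × ZMod 2

/-- Symplectic inner product recording (non-)commutation of Pauli operators. -/
def sympl {m : ℕ} (P Q : V m) : ZMod 2 :=
  ∑ i, ((P i).1 * (Q i).2 + (P i).2 * (Q i).1)

/-- Dot product on `Z2^n`. -/
def dot {n : ℕ} (x y : Fin n → ZMod 2) : ZMod 2 := ∑ i, x i * y i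

/-- The real sign `(-1)^z` associated with `z : ZMod 2`. -/
def sgn (z : ZMod 2) : ℝ := (-1 : ℝ) ^ z.val

/-- The Hermitian Pauli matrix labeled by `v : V n`. -/
noncomputable def W {n : ℕ} (v : V n) :
    Matrix (Fin n → ZMod 2) (Fin n → ZMod 2) ℂ := fun j k =>
  Complex.I ^ (Finset.univ.filter (fun i => (v i).1 = 1 ∧ (v i).2 = 1)).card *
    (-1 : ℂ) ^ (∑ i, (v i).2 * k i : ZMod 2).val *
    (if j = (fun i => k i + (v i).1) then 1 else 0)

/-- `Z^x`: the purely-Z Pauli matrix with Z-exponents `x`. -/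
noncomputable def Zpow {n : ℕ} (x : Fin n → ZMod 2) :
    Matrix (Fin n → ZMod 2) (Fin n → ZMod 2) ℂ :=
  W (fun i => ((0 : ZMod 2), x i))

/-- Matrices on the `(m+n)`-qubit space. -/
abbrev MatP (m n : ℕ) :=
  Matrix ((Fin m → ZMod 2) × (Fin n → ZMod 2)) ((Fin m → ZMod 2) × (Fin n → ZMod 2)) ℂ

/-- The uniform stochastic instrument with Pauli error rates `p`:
`U_k(ρ) = Σ_{a,b,P} p(a,b,P) (W(P) ⊗ E_{k+b,k+a}) ρ (W(P) ⊗ E_{k+b,k+a})†`. -/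
noncomputable def instU (n m : ℕ)
    (p : (Fin n → ZMod 2) × (Fin n → ZMod 2) × V m → ℝ)
    (k : Fin n → ZMod 2) (ρ : MatP m n) : MatP m n :=
  ∑ a : Fin n → ZMod 2, ∑ b : Fin n → ZMod 2, ∑ P : V m,
    (p (a, b, P) : ℂ) •
      ((W P ⊗ₖ Matrix.single (k + b) (k + a) (1 : ℂ)) * ρ *
        (W P ⊗ₖ Matrix.single (k + b) (k + a) (1 : ℂ))ᴴ)


/-- The noisy MCM `T_k(ρ) := U_k(G ρ G†)`. -/
noncomputable def instT (n m : ℕ)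
    (p : (Fin n → ZMod 2) × (Fin n → ZMod 2) × V m → ℝ)
    (G : MatP m n) (k : Fin n → ZMod 2) (ρ : MatP m n) : MatP m n :=
  instU n m p k (G * ρ * Gᴴ)

/-- The repeated-MCM composition: `seq ... i ρ` is
`T_{ms i}(H_{i-1} (⋯ H_0 (T_{ms 0}(ρ)) H_0† ⋯) H_{i-1}†)`. -/
noncomputable def seq (n m : ℕ)
    (p : (Fin n → ZMod 2) × (Fin n → ZMod 2) × V m → ℝ)
    (G : MatP m n) (H : ℕ → MatP m n) (ms : ℕ → Fin n → ZMod 2) :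
    ℕ → MatP m n → MatP m n
  | 0, ρ => instT n m p G (ms 0) ρ
  | i + 1, ρ => instT n m p G (ms (i + 1))
      (H i * seq n m p G H ms i ρ * (H i)ᴴ)

-- auxiliary
noncomputable def χ (z : ZMod 2) : ℂ := (-1 : ℂ) ^ z.val

lemma zmod2_cases (a : ZMod 2) : a = 0 ∨ a = 1 := by
  have h : ∀ b : ZMod 2, b = 0 ∨ b = 1 := by decide
  exact h a

lemma χ_zero : χ 0 = 1 := rfl

lemma χ_add (a b : ZMod 2) : χ (a + b) = χ a * χ b := by
  have h2 : (1 + 1 : ZMod 2) = 0 := by decide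
  rcases zmod2_cases a with rfl | rfl <;> rcases zmod2_cases b with rfl | rfl <;>
    simp [χ, h2, ZMod.val_one] <;> norm_num

lemma χ_sum {ι : Type*} (s : Finset ι) (f : ι → ZMod 2) :
    χ (∑ i ∈ s, f i) = ∏ i ∈ s, χ (f i) := by
  classical
  induction s using Finset.cons_induction with
  | empty => simp [χ_zero]
  | cons a s ha ih => rw [Finset.sum_cons, Finset.prod_cons, χ_add, ih]

lemma χ_sgn (z : ZMod 2) : ((sgn z : ℝ) : ℂ) = χ z := by
  simp [sgn, χ]

lemma χ_star (z : ZMod 2) : (starRingEnd ℂ) (χ z) = χ z := by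
  simp [χ]

lemma add_self_z2 (a : ZMod 2) : a + a = 0 := by
  rcases zmod2_cases a with rfl | rfl <;> decide

lemma vec_add_self {n : ℕ} (a : Fin n → ZMod 2) : a + a = 0 := by
  funext i; exact add_self_z2 _

def xp {m : ℕ} (v : V m) : Fin m → ZMod 2 := fun i => (v i).1
def zd {m : ℕ} (v : V m) (k : Fin m → ZMod 2) : ZMod 2 := ∑ i, (v i).2 * k i
noncomputable def ph {m : ℕ} (v : V m) : ℂ :=
  Complex.I ^ (Finset.univ.filter (fun i => (v i).1 = 1 ∧ (v i).2 = 1)).card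

lemma W_apply {m : ℕ} (v : V m) (j k : Fin m → ZMod 2) :
    W v j k = ph v * χ (zd v k) * (if j = k + xp v then 1 else 0) := rfl

lemma zd_add {m : ℕ} (v : V m) (k l : Fin m → ZMod 2) :
    zd v (k + l) = zd v k + zd v l := by
  simp [zd, mul_add, Finset.sum_add_distrib]

lemma dot_add_right {n : ℕ} (k x y : Fin n → ZMod 2) :
    dot k (x + y) = dot k x + dot k y := by
  simp [dot, mul_add, Finset.sum_add_distrib]

lemma dot_add_left {n : ℕ} (k x y : Fin n → ZMod 2) :
    dot (x + y) k = dot x k + dot y k := by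
  simp [dot, add_mul, Finset.sum_add_distrib]

lemma dot_comm {n : ℕ} (x y : Fin n → ZMod 2) : dot x y = dot y x := by
  simp [dot, mul_comm]

lemma sympl_eq {m : ℕ} (v w : V m) : sympl v w = zd v (xp w) + zd w (xp v) := by
  simp only [sympl, zd, xp, ← Finset.sum_add_distrib]
  exact Finset.sum_congr rfl fun i _ => by ring

lemma sympl_comm {m : ℕ} (v w : V m) : sympl v w = sympl w v := by
  rw [sympl_eq, sympl_eq, add_comm]

lemma W_mul_apply {m : ℕ} (v w : V m) (j k : Fin m → ZMod 2) :
    (W v * W w) j k =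
      ph v * ph w * χ (zd v (k + xp w) + zd w k) *
        (if j = k + (xp v + xp w) then 1 else 0) := by
  rw [Matrix.mul_apply]
  rw [Finset.sum_eq_single (k + xp w)]
  · rw [W_apply, W_apply, if_pos rfl]
    rw [show k + xp w + xp v = k + (xp v + xp w) by rw [add_assoc, add_comm (xp w)], χ_add]
    ring
  · intro l _ hl
    rw [W_apply, W_apply, if_neg hl]
    ring
  · intro h; exact absurd (Finset.mem_univ _) h

lemma W_comm {m : ℕ} (v w : V m) :
    W v * W w = χ (sympl v w) • (W w * W v) := by
  ext j k
  rw [Matrix.smul_apply, W_mul_apply, W_mul_apply, smul_eq_mul]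
  rw [show xp w + xp v = xp v + xp w from add_comm _ _]
  rw [zd_add, zd_add, χ_add, χ_add, χ_add, χ_add, sympl_eq, χ_add]
  have h1 : χ (zd v (xp w)) * χ (zd v (xp w)) = 1 := by
    rw [← χ_add, add_self_z2, χ_zero]
  have h2 : χ (zd w (xp v)) * χ (zd w (xp v)) = 1 := by
    rw [← χ_add, add_self_z2, χ_zero]
  by_cases hj : j = k + (xp v + xp w)
  · rw [if_pos hj]
    simp only [mul_one]
    linear_combination (-(ph v * ph w * χ (zd v k) * χ (zd w k) * χ (zd v (xp w)))) * h2
  · rw [if_neg hj]; ring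

lemma ph_star {m : ℕ} (v : V m) : (starRingEnd ℂ) (ph v) * ph v = 1 := by
  rw [ph, map_pow, ← mul_pow, Complex.conj_I]
  simp [Complex.I_mul_I]

lemma W_unital {m : ℕ} (v : V m) : (W v)ᴴ * W v = 1 := by
  ext j k
  rw [Matrix.mul_apply]
  rw [Finset.sum_eq_single (j + xp v)]
  · rw [Matrix.conjTranspose_apply, W_apply, W_apply, if_pos rfl]
    by_cases hjk : j = k
    · subst hjk
      rw [if_pos rfl, Matrix.one_apply_eq]
      simp only [mul_one, Complex.star_def, _root_.map_mul, χ_star]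
      calc (starRingEnd ℂ) (ph v) * χ (zd v j) * (ph v * χ (zd v j))
          = ((starRingEnd ℂ) (ph v) * ph v) * (χ (zd v j) * χ (zd v j)) := by ring
        _ = 1 := by rw [ph_star, ← χ_add, add_self_z2, χ_zero, mul_one]
    · rw [if_neg (fun h => hjk (by
        have := congrArg (· + xp v) h
        simpa [add_assoc, vec_add_self] using this)), Matrix.one_apply_ne hjk]
      simp
  · intro l _ hl
    rw [Matrix.conjTranspose_apply, W_apply, if_neg hl]
    simp
  · intro h; exact absurd (Finset.mem_univ _) h

lemma Zpow_diagonal {n : ℕ} (x : Fin n → ZMod 2) :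
    Zpow x = Matrix.diagonal (fun j => χ (dot x j)) := by
  ext j k
  rw [Zpow, W_apply, Matrix.diagonal_apply]
  have hph : ph (fun i => ((0 : ZMod 2), x i)) = 1 := by
    rw [ph]
    have : (Finset.univ.filter
        (fun i : Fin n => ((fun i => ((0 : ZMod 2), x i)) i).1 = 1 ∧
          ((fun i => ((0 : ZMod 2), x i)) i).2 = 1)) = ∅ := by
      ext i; simp
    rw [this]; simp
  have hxp : xp (fun i => ((0 : ZMod 2), x i)) = 0 := by funext i; rfl
  have hzd : zd (fun i => ((0 : ZMod 2), x i)) k = dot x k := rfl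
  rw [hph, hxp, hzd, add_zero, one_mul]
  by_cases h : j = k
  · subst h; rw [if_pos rfl, if_pos rfl, mul_one, dot_comm]
  · rw [if_neg h, if_neg h, mul_zero]

lemma kron_conjTranspose {α β : Type*} [Fintype α] [Fintype β] [DecidableEq α] [DecidableEq β]
    (A : Matrix α α ℂ) (B : Matrix β β ℂ) : (A ⊗ₖ B)ᴴ = Aᴴ ⊗ₖ Bᴴ := by
  ext ⟨i, j⟩ ⟨k, l⟩
  simp [Matrix.conjTranspose_apply, Matrix.kroneckerMap_apply, star_mul', mul_comm]

lemma stdBasis_conjTranspose {β : Type*} [Fintype β] [DecidableEq β] (u v : β) :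
    (Matrix.single u v (1 : ℂ))ᴴ = Matrix.single v u 1 := by
  ext i j
  simp only [Matrix.conjTranspose_apply, Matrix.single]
  by_cases h1 : u = j <;> by_cases h2 : v = i <;> simp [h1, h2, and_comm]

lemma stdBasis_mul_diagonal {β : Type*} [Fintype β] [DecidableEq β] (u v : β) (d : β → ℂ) :
    Matrix.single u v (1 : ℂ) * Matrix.diagonal d
      = d v • Matrix.single u v 1 := by
  ext i j
  rw [Matrix.mul_diagonal]
  simp only [Matrix.smul_apply, Matrix.single, smul_eq_mul]
  by_cases h1 : u = i <;> by_cases h2 : v = j <;> simp [h1, h2] <;> subst h2 <;> ring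

lemma diagonal_eq_sum_std {β : Type*} [Fintype β] [DecidableEq β] (d : β → ℂ) :
    Matrix.diagonal d = ∑ j, d j • Matrix.single j j (1 : ℂ) := by
  ext i j
  rw [Matrix.sum_apply, Matrix.diagonal_apply, Finset.sum_eq_single i]
  · by_cases h : i = j <;> simp [Matrix.single, h, eq_comm]
  · intro b _ hb
    simp [Matrix.single, hb]
  · intro h; exact absurd (Finset.mem_univ _) h

lemma kronecker_sum' {α β ι : Type*} [Fintype α] [Fintype β] (A : Matrix α α ℂ)
    (s : Finset ι) (f : ι → Matrix β β ℂ) :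
    A ⊗ₖ (∑ j ∈ s, f j) = ∑ j ∈ s, A ⊗ₖ f j := by
  ext ⟨a, b⟩ ⟨c, e⟩
  simp [Matrix.kroneckerMap_apply, Matrix.sum_apply, Finset.mul_sum]

lemma conj_term {n m : ℕ} (Q P : V m) (y : Fin n → ZMod 2) (u v : Fin n → ZMod 2) :
    (W P ⊗ₖ Matrix.single u v (1 : ℂ))ᴴ * (W Q ⊗ₖ Zpow y) *
      (W P ⊗ₖ Matrix.single u v 1)
    = (χ (sympl P Q) * χ (dot y u)) • (W Q ⊗ₖ Matrix.single v v 1) := by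
  rw [kron_conjTranspose, stdBasis_conjTranspose, ← Matrix.mul_kronecker_mul,
    ← Matrix.mul_kronecker_mul]
  have hW : (W P)ᴴ * W Q * W P = χ (sympl P Q) • W Q := by
    rw [mul_assoc, W_comm Q P, Matrix.mul_smul, ← mul_assoc, W_unital, one_mul,
      sympl_comm Q P]
  have hE : Matrix.single v u (1 : ℂ) * Zpow y * Matrix.single u v 1
      = χ (dot y u) • Matrix.single v v 1 := by
    rw [Zpow_diagonal, stdBasis_mul_diagonal, Matrix.smul_mul,
      Matrix.single_mul_single_same, mul_one]
  rw [hW, hE, Matrix.smul_kronecker, Matrix.kronecker_smul, smul_smul]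

lemma trace_kron_diag {n m : ℕ} (Q : V m) (x : Fin n → ZMod 2) (σ : MatP m n) :
    ((W Q ⊗ₖ Zpow x) * σ).trace
      = ∑ j, χ (dot x j) * ((W Q ⊗ₖ Matrix.single j j (1 : ℂ)) * σ).trace := by
  rw [Zpow_diagonal, diagonal_eq_sum_std, kronecker_sum', Matrix.sum_mul, Matrix.trace_sum]
  refine Finset.sum_congr rfl fun j _ => ?_
  rw [Matrix.kronecker_smul, Matrix.smul_mul, Matrix.trace_smul, smul_eq_mul]

lemma trace_conj {n m : ℕ} (Q P : V m) (y : Fin n → ZMod 2) (u v : Fin n → ZMod 2)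
    (σ : MatP m n) :
    ((W Q ⊗ₖ Zpow y) *
      ((W P ⊗ₖ Matrix.single u v (1 : ℂ)) * σ *
        (W P ⊗ₖ Matrix.single u v (1 : ℂ))ᴴ)).trace
    = χ (sympl P Q) * χ (dot y u) *
        ((W Q ⊗ₖ Matrix.single v v (1 : ℂ)) * σ).trace := by
  set A := W P ⊗ₖ Matrix.single u v (1 : ℂ) with hA
  set O := W Q ⊗ₖ Zpow y with hO
  have h1 : O * (A * σ * Aᴴ) = (O * A * σ) * Aᴴ := by
    rw [mul_assoc, mul_assoc, mul_assoc]
  rw [h1, Matrix.trace_mul_comm, ← mul_assoc, ← mul_assoc, hA, hO, conj_term,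
    Matrix.smul_mul, Matrix.trace_smul, smul_eq_mul]

lemma expand {n m : ℕ} (p : (Fin n → ZMod 2) × (Fin n → ZMod 2) × V m → ℝ)
    (Q : V m) (y : Fin n → ZMod 2) (k : Fin n → ZMod 2) (σ : MatP m n) :
    ((W Q ⊗ₖ Zpow y) * instU n m p k σ).trace
    = ∑ a, ∑ b, ∑ P, (p (a, b, P) : ℂ) *
        (χ (sympl P Q) * χ (dot y (k + b)) *
          ((W Q ⊗ₖ Matrix.single (k + a) (k + a) (1 : ℂ)) * σ).trace) := by
  rw [instU, Matrix.mul_sum, Matrix.trace_sum]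
  refine Finset.sum_congr rfl fun a _ => ?_
  rw [Matrix.mul_sum, Matrix.trace_sum]
  refine Finset.sum_congr rfl fun b _ => ?_
  rw [Matrix.mul_sum, Matrix.trace_sum]
  refine Finset.sum_congr rfl fun P _ => ?_
  rw [Matrix.mul_smul, Matrix.trace_smul, smul_eq_mul, trace_conj]

lemma stepU {n m : ℕ} (p : (Fin n → ZMod 2) × (Fin n → ZMod 2) × V m → ℝ)
    (x y : Fin n → ZMod 2) (Q : V m) (σ : MatP m n) :
    ∑ k, χ (dot k (x + y)) * ((W Q ⊗ₖ Zpow y) * instU n m p k σ).trace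
    = (∑ a, ∑ b, ∑ P, (χ (dot a x + dot b y + sympl P Q) * (p (a, b, P) : ℂ))) *
        ((W Q ⊗ₖ Zpow x) * σ).trace := by
  have h2 : (2 : ZMod 2) = 0 := rfl
  -- RHS expansion
  rw [trace_kron_diag]
  simp only [Finset.sum_mul]
  -- LHS expansion
  simp only [expand p Q y, Finset.mul_sum]
  rw [Finset.sum_comm]
  refine Finset.sum_congr rfl fun a _ => ?_
  rw [Finset.sum_comm]
  refine Finset.sum_congr rfl fun b _ => ?_
  rw [Finset.sum_comm]
  refine Finset.sum_congr rfl fun P _ => ?_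
  refine Fintype.sum_equiv (Equiv.addRight a) _ _ fun k => ?_
  simp only [Equiv.coe_addRight]
  have he : dot k (x + y) + (sympl P Q + dot y (k + b))
      = (dot a x + dot b y + sympl P Q) + dot x (k + a) := by
    simp only [dot_add_left, dot_add_right]
    rw [dot_comm y k, dot_comm y b, dot_comm x k, dot_comm x a]
    linear_combination (dot k y - dot a x) * h2
  calc χ (dot k (x + y)) *
        ((p (a, b, P) : ℂ) * (χ (sympl P Q) * χ (dot y (k + b)) *
          ((W Q ⊗ₖ Matrix.single (k + a) (k + a) (1 : ℂ)) * σ).trace))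
      = χ (dot k (x + y) + (sympl P Q + dot y (k + b))) *
          ((p (a, b, P) : ℂ) *
            ((W Q ⊗ₖ Matrix.single (k + a) (k + a) (1 : ℂ)) * σ).trace) := by
        rw [χ_add, χ_add]; ring
    _ = χ ((dot a x + dot b y + sympl P Q) + dot x (k + a)) *
          ((p (a, b, P) : ℂ) *
            ((W Q ⊗ₖ Matrix.single (k + a) (k + a) (1 : ℂ)) * σ).trace) := by rw [he]
    _ = χ (dot a x + dot b y + sympl P Q) * (p (a, b, P) : ℂ) *
          (χ (dot x (k + a)) *
            ((W Q ⊗ₖ Matrix.single (k + a) (k + a) (1 : ℂ)) * σ).trace) := by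
        rw [χ_add]; ring

lemma stepT {n m : ℕ} (p : (Fin n → ZMod 2) × (Fin n → ZMod 2) × V m → ℝ)
    (G : MatP m n) (x y : Fin n → ZMod 2) (Q : V m) (σ : MatP m n) :
    ∑ k, χ (dot k (x + y)) * ((W Q ⊗ₖ Zpow y) * instT n m p G k σ).trace
    = (∑ a, ∑ b, ∑ P, (χ (dot a x + dot b y + sympl P Q) * (p (a, b, P) : ℂ))) *
        (Gᴴ * (W Q ⊗ₖ Zpow x) * G * σ).trace := by
  simp only [instT]
  rw [stepU]
  congr 1
  rw [show (W Q ⊗ₖ Zpow x) * (G * σ * Gᴴ) = ((W Q ⊗ₖ Zpow x) * G * σ) * Gᴴ by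
    rw [mul_assoc, mul_assoc, mul_assoc]]
  rw [Matrix.trace_mul_comm, ← mul_assoc, ← mul_assoc]

lemma lam_cast {n m : ℕ} (p : (Fin n → ZMod 2) × (Fin n → ZMod 2) × V m → ℝ)
    (lam : (Fin n → ZMod 2) → (Fin n → ZMod 2) → V m → ℝ)
    (hlam : ∀ (x y : Fin n → ZMod 2) (Q : V m),
      lam x y Q = ∑ a : Fin n → ZMod 2, ∑ b : Fin n → ZMod 2, ∑ P : V m,
        sgn (dot a x + dot b y + sympl P Q) * p (a, b, P))
    (x y : Fin n → ZMod 2) (Q : V m) :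
    (lam x y Q : ℂ)
      = ∑ a, ∑ b, ∑ P, (χ (dot a x + dot b y + sympl P Q) * (p (a, b, P) : ℂ)) := by
  rw [hlam]
  push_cast
  simp only [χ_sgn]

lemma seq_congr {n m : ℕ} (p : (Fin n → ZMod 2) × (Fin n → ZMod 2) × V m → ℝ)
    (G : MatP m n) (H : ℕ → MatP m n) (ms1 ms2 : ℕ → Fin n → ZMod 2) (ρ : MatP m n)
    (i : ℕ) (h : ∀ j, j ≤ i → ms1 j = ms2 j) :
    seq n m p G H ms1 i ρ = seq n m p G H ms2 i ρ := by
  induction i with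
  | zero => rw [seq, seq, h 0 le_rfl]
  | succ t ih =>
      rw [seq, seq, h (t + 1) le_rfl,
        ih (fun j hj => h j (le_trans hj (Nat.le_succ t)))]

lemma aux {n m : ℕ} (p : (Fin n → ZMod 2) × (Fin n → ZMod 2) × V m → ℝ)
    (lam : (Fin n → ZMod 2) → (Fin n → ZMod 2) → V m → ℝ)
    (hlam : ∀ (x y : Fin n → ZMod 2) (Q : V m),
      lam x y Q = ∑ a : Fin n → ZMod 2, ∑ b : Fin n → ZMod 2, ∑ P : V m,
        sgn (dot a x + dot b y + sympl P Q) * p (a, b, P))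
    (G : MatP m n)
    (x y : ℕ → Fin n → ZMod 2) (Q : ℕ → V m) (H : ℕ → MatP m n) (l' : ℕ)
    (hHu : ∀ i, i + 1 < l' + 1 → (H i)ᴴ * H i = 1)
    (hH : ∀ i, i + 1 < l' + 1 → H i * (W (Q i) ⊗ₖ Zpow (y i)) * (H i)ᴴ =
        Gᴴ * (W (Q (i + 1)) ⊗ₖ Zpow (x (i + 1))) * G)
    (ρ : MatP m n) :
    ∑ ms : Fin (l' + 1) → (Fin n → ZMod 2),
      (∏ i : Fin (l' + 1), χ (dot (ms i) (x (i : ℕ) + y (i : ℕ)))) *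
        ((W (Q l') ⊗ₖ Zpow (y l')) *
          seq n m p G H (fun i => if h : i < l' + 1 then ms ⟨i, h⟩ else 0) l' ρ).trace
    = (∏ i ∈ Finset.range (l' + 1), (lam (x i) (y i) (Q i) : ℂ)) *
        (Gᴴ * (W (Q 0) ⊗ₖ Zpow (x 0)) * G * ρ).trace := by
  induction l' generalizing ρ with
  | zero =>
      rw [show ∑ ms : Fin 1 → (Fin n → ZMod 2),
            (∏ i : Fin 1, χ (dot (ms i) (x (i : ℕ) + y (i : ℕ)))) *
              ((W (Q 0) ⊗ₖ Zpow (y 0)) *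
                seq n m p G H (fun i => if h : i < 1 then ms ⟨i, h⟩ else 0) 0 ρ).trace
          = ∑ k, χ (dot k (x 0 + y 0)) *
              ((W (Q 0) ⊗ₖ Zpow (y 0)) * instT n m p G k ρ).trace from
        Fintype.sum_equiv (Equiv.funUnique (Fin 1) _) _ _ (fun ms => by
          simp [seq, Equiv.funUnique])]
      rw [stepT, ← lam_cast p lam hlam, Finset.prod_range_one]
  | succ t ih =>
      have ht : t + 1 < t + 2 := by omega
      rw [← Equiv.sum_comp (Fin.snocEquiv (fun _ => Fin n → ZMod 2))
        (fun ms : Fin (t + 1 + 1) → (Fin n → ZMod 2) =>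
          (∏ i : Fin (t + 1 + 1), χ (dot (ms i) (x (i : ℕ) + y (i : ℕ)))) *
            ((W (Q (t + 1)) ⊗ₖ Zpow (y (t + 1))) *
              seq n m p G H (fun i => if h : i < t + 1 + 1 then ms ⟨i, h⟩ else 0)
                (t + 1) ρ).trace)]
      simp only [Fin.snocEquiv_apply]
      rw [Fintype.sum_prod_type, Finset.sum_comm]
      have hmain : ∀ rest : Fin (t + 1) → (Fin n → ZMod 2),
          (∑ last : Fin n → ZMod 2,
            (∏ i : Fin (t + 1 + 1),
              χ (dot (Fin.snoc (α := fun _ => Fin n → ZMod 2) rest last i) (x (i : ℕ) + y (i : ℕ)))) *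
              ((W (Q (t + 1)) ⊗ₖ Zpow (y (t + 1))) *
                seq n m p G H
                  (fun i => if h : i < t + 1 + 1 then Fin.snoc (α := fun _ => Fin n → ZMod 2) rest last ⟨i, h⟩ else 0)
                  (t + 1) ρ).trace)
          = (lam (x (t + 1)) (y (t + 1)) (Q (t + 1)) : ℂ) *
              ((∏ i : Fin (t + 1), χ (dot (rest i) (x (i : ℕ) + y (i : ℕ)))) *
                ((W (Q t) ⊗ₖ Zpow (y t)) *
                  seq n m p G H
                    (fun i => if h : i < t + 1 then rest ⟨i, h⟩ else 0) t ρ).trace) := by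
        intro rest
        have hseq : ∀ last : Fin n → ZMod 2,
            seq n m p G H
                (fun i => if h : i < t + 1 + 1 then Fin.snoc (α := fun _ => Fin n → ZMod 2) rest last ⟨i, h⟩ else 0) t ρ
              = seq n m p G H (fun i => if h : i < t + 1 then rest ⟨i, h⟩ else 0) t ρ := by
          intro last
          refine seq_congr p G H _ _ ρ t fun j hj => ?_
          have hj2 : j < t + 1 + 1 := by omega
          have hj1 : j < t + 1 := by omega
          rw [dif_pos hj2, dif_pos hj1]
          have hc : (⟨j, hj2⟩ : Fin (t + 2)) = Fin.castSucc ⟨j, hj1⟩ := rfl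
          rw [hc, Fin.snoc_castSucc]
        have hprod : ∀ last : Fin n → ZMod 2,
            (∏ i : Fin (t + 1 + 1),
              χ (dot (Fin.snoc (α := fun _ => Fin n → ZMod 2) rest last i) (x (i : ℕ) + y (i : ℕ))))
            = (∏ i : Fin (t + 1), χ (dot (rest i) (x (i : ℕ) + y (i : ℕ)))) *
                χ (dot last (x (t + 1) + y (t + 1))) := by
          intro last
          rw [Fin.prod_univ_castSucc]
          congr 1
          · exact Finset.prod_congr rfl fun i _ => by rw [Fin.snoc_castSucc]; rfl
          · rw [Fin.snoc_last]; rfl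
        have hlastidx : ∀ last : Fin n → ZMod 2,
            (if h : t + 1 < t + 1 + 1 then
              Fin.snoc (α := fun _ => Fin n → ZMod 2) rest last ⟨t + 1, h⟩ else 0) = last := by
          intro last
          rw [dif_pos ht]
          have hc : (⟨t + 1, ht⟩ : Fin (t + 2)) = Fin.last (t + 1) := rfl
          rw [hc, Fin.snoc_last]
        have hterm : ∀ last : Fin n → ZMod 2,
            (∏ i : Fin (t + 1 + 1),
              χ (dot (Fin.snoc (α := fun _ => Fin n → ZMod 2) rest last i) (x (i : ℕ) + y (i : ℕ)))) *
              ((W (Q (t + 1)) ⊗ₖ Zpow (y (t + 1))) *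
                seq n m p G H
                  (fun i => if h : i < t + 1 + 1 then Fin.snoc (α := fun _ => Fin n → ZMod 2) rest last ⟨i, h⟩ else 0)
                  (t + 1) ρ).trace
            = (∏ i : Fin (t + 1), χ (dot (rest i) (x (i : ℕ) + y (i : ℕ)))) *
                (χ (dot last (x (t + 1) + y (t + 1))) *
                  ((W (Q (t + 1)) ⊗ₖ Zpow (y (t + 1))) *
                    instT n m p G last
                      (H t * seq n m p G H
                        (fun i => if h : i < t + 1 then rest ⟨i, h⟩ else 0) t ρ *
                        (H t)ᴴ)).trace) := by
          intro last
          rw [hprod last, seq, hlastidx last, hseq last, mul_assoc]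
        rw [Finset.sum_congr rfl fun last _ => hterm last, ← Finset.mul_sum, stepT,
          ← lam_cast p lam hlam]
        have htr : (Gᴴ * (W (Q (t + 1)) ⊗ₖ Zpow (x (t + 1))) * G *
              (H t * seq n m p G H (fun i => if h : i < t + 1 then rest ⟨i, h⟩ else 0) t ρ *
                (H t)ᴴ)).trace
            = ((W (Q t) ⊗ₖ Zpow (y t)) *
                seq n m p G H (fun i => if h : i < t + 1 then rest ⟨i, h⟩ else 0) t ρ).trace := by
          rw [← hH t ht]
          set S := seq n m p G H (fun i => if h : i < t + 1 then rest ⟨i, h⟩ else 0) t ρ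
            with hS
          set O := W (Q t) ⊗ₖ Zpow (y t) with hO
          have h1 : H t * O * (H t)ᴴ * (H t * S * (H t)ᴴ) = H t * (O * S) * (H t)ᴴ := by
            simp only [mul_assoc]
            rw [← mul_assoc ((H t)ᴴ) (H t) (S * (H t)ᴴ), hHu t ht, one_mul]
          rw [h1, Matrix.trace_mul_comm, ← mul_assoc ((H t)ᴴ) (H t) (O * S),
            hHu t ht, one_mul]
        rw [htr]
        ring
      rw [Finset.sum_congr rfl fun rest _ => hmain rest, ← Finset.mul_sum,
        ih (fun i h => hHu i (by omega)) (fun i h => hH i (by omega)) ρ,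
        Finset.prod_range_succ (fun i => (lam (x i) (y i) (Q i) : ℂ)) (t + 1)]
      ring

/-- Core identity underlying the generalized cycle benchmarking protocol
(Theorem 1 of the paper). Indices are shifted by one relative to the paper:
the paper's `x_i, y_i, Q_i, H_i, m_i` (for `i = 1, …, l`) are `x (i-1)` etc. here. -/
theorem stmt_4 (n m : ℕ)
    (p : (Fin n → ZMod 2) × (Fin n → ZMod 2) × V m → ℝ)
    (lam : (Fin n → ZMod 2) → (Fin n → ZMod 2) → V m → ℝ)
    (hlam : ∀ (x y : Fin n → ZMod 2) (Q : V m),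
      lam x y Q = ∑ a : Fin n → ZMod 2, ∑ b : Fin n → ZMod 2, ∑ P : V m,
        sgn (dot a x + dot b y + sympl P Q) * p (a, b, P))
    (G : MatP m n) (hG : G * Gᴴ = 1) (hG' : Gᴴ * G = 1)
    (l : ℕ) (hl : 1 ≤ l)
    (x y : ℕ → Fin n → ZMod 2) (Q : ℕ → V m) (H : ℕ → MatP m n)
    (hHunitary : ∀ i, i + 1 < l → H i * (H i)ᴴ = 1 ∧ (H i)ᴴ * H i = 1)
    (hH : ∀ i, i + 1 < l →
      H i * (W (Q i) ⊗ₖ Zpow (y i)) * (H i)ᴴ =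
        Gᴴ * (W (Q (i + 1)) ⊗ₖ Zpow (x (i + 1))) * G)
    (ρ : MatP m n) :
    ∑ ms : Fin l → (Fin n → ZMod 2),
      ((sgn (∑ i : Fin l, dot (ms i) (x (i : ℕ) + y (i : ℕ))) : ℂ) *
        ((W (Q (l - 1)) ⊗ₖ Zpow (y (l - 1))) *
          seq n m p G H (fun i => if h : i < l then ms ⟨i, h⟩ else 0) (l - 1) ρ).trace)
    = (∏ i ∈ Finset.range l, (lam (x i) (y i) (Q i) : ℂ)) *
        (Gᴴ * (W (Q 0) ⊗ₖ Zpow (x 0)) * G * ρ).trace := by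
  obtain ⟨l', rfl⟩ : ∃ l', l = l' + 1 := ⟨l - 1, by omega⟩
  have hred : l' + 1 - 1 = l' := rfl
  rw [show (∑ ms : Fin (l' + 1) → (Fin n → ZMod 2),
      ((sgn (∑ i : Fin (l' + 1), dot (ms i) (x (i : ℕ) + y (i : ℕ))) : ℂ) *
        ((W (Q (l' + 1 - 1)) ⊗ₖ Zpow (y (l' + 1 - 1))) *
          seq n m p G H (fun i => if h : i < l' + 1 then ms ⟨i, h⟩ else 0)
            (l' + 1 - 1) ρ).trace))
    = ∑ ms : Fin (l' + 1) → (Fin n → ZMod 2),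
      (∏ i : Fin (l' + 1), χ (dot (ms i) (x (i : ℕ) + y (i : ℕ)))) *
        ((W (Q l') ⊗ₖ Zpow (y l')) *
          seq n m p G H (fun i => if h : i < l' + 1 then ms ⟨i, h⟩ else 0) l' ρ).trace from
    Finset.sum_congr rfl fun ms _ => by rw [hred, χ_sgn, χ_sum]]
  exact aux p lam hlam G x y Q H l' (fun i h => (hHunitary i h).2) hH ρ
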